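/- For every cardinal κ < 𝔟 and every family (F_α)_{α<κ} of sets in fN(Fin), the union ⋃_{α<κ} F_α belongs to fN(Fin); that is, add(fN(Fin)) ≥ 𝔟. -/

import Mathlib

open Filter Set

/-- The basic clopen set `[σ]` in the Baire space determined by a finite sequence `σ`. -/
def cylinder (σ : List ℕ) : Set (ℕ → ℕ) :=
  {x | ∀ i : Fin σ.length, x i = σ.get i}

/-- `limsup_n h(n) = ∞`, i.e. `h` takes arbitrarily large values frequently. -/
def LimsupInfty (h : ℕ → ℕ) : Prop :=
  ∀ m : ℕ, ∃ᶠ n in Filter.atTop, m ≤ h n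

/-- The family `fN(h)` of fake null sets: `F ∈ fN(h)` iff for every `ε > 0` there is a
sequence of finite sequences `σ_n` with `∑ 1/h(|σ_n|) < ε` covering `F`. -/
def fN (h : ℕ → ℕ) (F : Set (ℕ → ℕ)) : Prop :=
  ∀ ε : ℝ, 0 < ε →
    ∃ σ : ℕ → List ℕ,
      Summable (fun n => (1 : ℝ) / (h (σ n).length : ℝ)) ∧
      (∑' n, (1 : ℝ) / (h (σ n).length : ℝ)) < ε ∧
      F ⊆ ⋃ n, cylinder (σ n)

/-- The restriction of `x` to the interval `[l, u)`, extended by `0` elsewhere. -/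
def restrIco (x : ℕ → ℕ) (l u : ℕ) : ℕ → ℕ :=
  fun i => if l ≤ i ∧ i < u then x i else 0

/-- `J` is a set of patterns on the interval `[l, u)`: every element vanishes off `[l, u)`. -/
def SuppIco (l u : ℕ) (J : Set (ℕ → ℕ)) : Prop :=
  ∀ σ ∈ J, ∀ i, ¬ (l ≤ i ∧ i < u) → σ i = 0

/-- The family `fE(h)`: partition `ℕ` into consecutive nonempty intervals `I_n = [a n, a (n+1))`
(`a 0 = 0`, `a` strictly increasing), patterns `J_n ⊆ ω^{I_n}` with `∑ |J_n|/h(|I_n|) < ∞`,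
and `F ⊆ {x : x↾I_n ∈ J_n for all but finitely many n}`. -/
def fE (h : ℕ → ℕ) (F : Set (ℕ → ℕ)) : Prop :=
  ∃ a : ℕ → ℕ, a 0 = 0 ∧ StrictMono a ∧
    ∃ J : ℕ → Set (ℕ → ℕ),
      (∀ n, SuppIco (a n) (a (n+1)) (J n)) ∧
      (∀ n, (J n).Finite) ∧
      Summable (fun n => ((J n).ncard : ℝ) / (h (a (n+1) - a n) : ℝ)) ∧
      F ⊆ {x | ∀ᶠ n in Filter.atTop, restrIco x (a n) (a (n+1)) ∈ J n}

/-- The family `fS(h)` of fake small sets: as `fE(h)` but with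
`x↾I_n ∈ J_n` for infinitely many `n`. -/
def fS (h : ℕ → ℕ) (F : Set (ℕ → ℕ)) : Prop :=
  ∃ a : ℕ → ℕ, a 0 = 0 ∧ StrictMono a ∧
    ∃ J : ℕ → Set (ℕ → ℕ),
      (∀ n, SuppIco (a n) (a (n+1)) (J n)) ∧
      (∀ n, (J n).Finite) ∧
      Summable (fun n => ((J n).ncard : ℝ) / (h (a (n+1) - a n) : ℝ)) ∧
      F ⊆ {x | ∃ᶠ n in Filter.atTop, restrIco x (a n) (a (n+1)) ∈ J n}

/-- The family `fE(Fin)`: as `fE(h)` but one only requires each pattern set `J_n` to be finite. -/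
def fEFin (F : Set (ℕ → ℕ)) : Prop :=
  ∃ a : ℕ → ℕ, a 0 = 0 ∧ StrictMono a ∧
    ∃ J : ℕ → Set (ℕ → ℕ),
      (∀ n, SuppIco (a n) (a (n+1)) (J n)) ∧
      (∀ n, (J n).Finite) ∧
      F ⊆ {x | ∀ᶠ n in Filter.atTop, restrIco x (a n) (a (n+1)) ∈ J n}

/-- The family `fS(Fin)`: as `fS(h)` but one only requires each pattern set `J_n` to be finite. -/
def fSFin (F : Set (ℕ → ℕ)) : Prop :=
  ∃ a : ℕ → ℕ, a 0 = 0 ∧ StrictMono a ∧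
    ∃ J : ℕ → Set (ℕ → ℕ),
      (∀ n, SuppIco (a n) (a (n+1)) (J n)) ∧
      (∀ n, (J n).Finite) ∧
      F ⊆ {x | ∃ᶠ n in Filter.atTop, restrIco x (a n) (a (n+1)) ∈ J n}

/-- The family `fN(Fin)`: there are finite `S_n ⊆ ω^n` with
`F ⊆ {x : x↾n ∈ S_n for infinitely many n}`. -/
def fNFin (F : Set (ℕ → ℕ)) : Prop :=
  ∃ S : (n : ℕ) → Set (Fin n → ℕ),
    (∀ n, (S n).Finite) ∧
    F ⊆ {x | ∃ᶠ n in Filter.atTop, (fun i : Fin n => x i) ∈ S n}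

/-- The σ-ideal `M_-`: there are `x_F ∈ ω^ω` and a partition of `ℕ` into consecutive nonempty
intervals `I_n = [a n, a (n+1))` with `F ⊆ {x : x↾I_n ≠ x_F↾I_n for all but finitely many n}`. -/
def Mminus (F : Set (ℕ → ℕ)) : Prop :=
  ∃ xF : ℕ → ℕ, ∃ a : ℕ → ℕ, a 0 = 0 ∧ StrictMono a ∧
    F ⊆ {x | ∀ᶠ n in Filter.atTop, ∃ i, a n ≤ i ∧ i < a (n+1) ∧ x i ≠ xF i}

/-- The bounding number `𝔟`. -/
noncomputable def frakb : Cardinal :=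
  sInf {c : Cardinal |
    ∃ B : Set (ℕ → ℕ), Cardinal.mk B = c ∧
      ∀ x : ℕ → ℕ, ∃ f ∈ B, ∃ᶠ n in Filter.atTop, x n < f n}

theorem stmt9 (κ : Cardinal) (hκ : κ < frakb) (ι : Type) (hι : Cardinal.mk ι = κ)
    (F : ι → Set (ℕ → ℕ)) (hF : ∀ i, fNFin (F i)) :
    fNFin (⋃ i, F i) := by
  choose S hSfin hSsub using hF
  set H : ι → ℕ → ℕ := fun i n =>
    ((hSfin i n).toFinset.sup fun σ => Finset.univ.sup σ) + 1 with hH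
  have key : ¬ (∀ x : ℕ → ℕ, ∃ f ∈ Set.range H, ∃ᶠ n in Filter.atTop, x n < f n) := by
    intro hB
    have h1 : frakb ≤ Cardinal.mk (Set.range H) :=
      csInf_le' ⟨Set.range H, rfl, hB⟩
    have h2 : Cardinal.mk (Set.range H) ≤ κ := by
      rw [← hι]; exact Cardinal.mk_range_le
    exact absurd ((h1.trans h2).trans_lt hκ) (lt_irrefl _)
  push_neg at key
  obtain ⟨g, hg⟩ := key
  have hdom : ∀ i, ∀ᶠ n in Filter.atTop, H i n ≤ g n := by
    intro i
    have := hg (H i) ⟨i, rfl⟩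
    filter_upwards [this] with n hn
    exact hn
  refine ⟨fun n => {σ | ∀ k, σ k ≤ g n}, ?_, ?_⟩
  · intro n
    apply Set.Finite.subset (Set.Finite.pi (fun _ : Fin n => Set.finite_Iic (g n)))
    intro σ hσ k _
    exact hσ k
  · intro x hx
    obtain ⟨i, hi⟩ := Set.mem_iUnion.mp hx
    have hfr : ∃ᶠ n in Filter.atTop, (fun k : Fin n => x k) ∈ S i n := hSsub i hi
    have := hfr.and_eventually (hdom i)
    refine this.mono ?_
    rintro n ⟨hmem, hle⟩ k
    have h3 : x k ≤ Finset.univ.sup (fun k : Fin n => x k) :=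
      Finset.le_sup (f := fun k : Fin n => x k) (Finset.mem_univ k)
    have h4 : Finset.univ.sup (fun k : Fin n => x k) ≤
        (hSfin i n).toFinset.sup (fun σ => Finset.univ.sup σ) :=
      Finset.le_sup ((hSfin i n).mem_toFinset.mpr hmem)
    have : x k < H i n := by
      simp only [hH]
      omega
    exact le_of_lt (this.trans_le hle)
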